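/- Let a, b, c, d, e be nonzero integers. For every rational number r with r^2 ≠ a^4 + d^4, set x = (b r^2 + 2d(ae - bd) r - a^4 b - 2a d^3 e + b d^4)/(a^4 + d^4 - r^2) and y = (d/a)·x. If x ≠ 0, then there exists a rational number z with z^2 = f(x)^2 + g(y)^2, where f(x) = (x+a)(x+b)(x+c)/x and g(y) = (y+d)(y+e)(y + cd/a)/y. -/

import Mathlib

set_option maxRecDepth 8000 in
set_option maxHeartbeats 2000000 in
lemma key12 (a b c d e x r : ℚ) (ha : a ≠ 0) (hd : d ≠ 0) (hx : x ≠ 0)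
    (h : a ^ 4 * (x + b) ^ 2 + (d ^ 2 * x + a * d * e) ^ 2
      = (r * (x + b) + d * (a * e - b * d)) ^ 2) :
    (((x + a) * (x + c) / x) * ((r * (x + b) + d * (a * e - b * d)) / a ^ 2)) ^ 2
      = ((x + a) * (x + b) * (x + c) / x) ^ 2
        + ((d / a * x + d) * (d / a * x + e) * (d / a * x + c * d / a) / (d / a * x)) ^ 2 := by
  have h2 : ((x + a) * (x + b) * (x + c) / x) ^ 2
        + ((d / a * x + d) * (d / a * x + e) * (d / a * x + c * d / a) / (d / a * x)) ^ 2
      = ((x + a) * (x + c) / x) ^ 2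
          * ((a ^ 4 * (x + b) ^ 2 + (d ^ 2 * x + a * d * e) ^ 2) / a ^ 4) := by
    have hy : d / a * x ≠ 0 := mul_ne_zero (div_ne_zero hd ha) hx
    field_simp
  rw [h2, h]
  ring

/-- The rational point produced in the proof of Theorem 1.3 of Zhang–Zargar
gives a rational solution of `z^2 = f(x)^2 + g(y)^2`, where
`f(x) = (x+a)(x+b)(x+c)/x` and `g(y) = (y+d)(y+e)(y+cd/a)/y`. -/
theorem stmt12 (a b c d e : ℤ) (ha : a ≠ 0) (hb : b ≠ 0) (hc : c ≠ 0)
    (hd : d ≠ 0) (he : e ≠ 0) (r : ℚ) (hr : r ^ 2 ≠ (a : ℚ) ^ 4 + d ^ 4) :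
    let x : ℚ := (b * r ^ 2 + 2 * d * (a * e - b * d) * r - a ^ 4 * b
      - 2 * a * d ^ 3 * e + b * d ^ 4) / (a ^ 4 + d ^ 4 - r ^ 2)
    let y : ℚ := (d / a) * x
    x ≠ 0 →
      ∃ z : ℚ, z ^ 2 = ((x + a) * (x + b) * (x + c) / x) ^ 2
        + ((y + d) * (y + e) * (y + c * d / a) / y) ^ 2 := by
  intro x y hx
  have ha' : (a : ℚ) ≠ 0 := Int.cast_ne_zero.mpr ha
  have hd' : (d : ℚ) ≠ 0 := Int.cast_ne_zero.mpr hd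
  have hden : (a : ℚ) ^ 4 + d ^ 4 - r ^ 2 ≠ 0 := sub_ne_zero.mpr (Ne.symm hr)
  have hxdef : x = (b * r ^ 2 + 2 * d * (a * e - b * d) * r - a ^ 4 * b
      - 2 * a * d ^ 3 * e + b * d ^ 4) / ((a : ℚ) ^ 4 + d ^ 4 - r ^ 2) := rfl
  have hydef : y = (d : ℚ) / a * x := rfl
  have h : (a : ℚ) ^ 4 * (x + b) ^ 2 + ((d : ℚ) ^ 2 * x + a * d * e) ^ 2
      = (r * (x + b) + d * (a * e - b * d)) ^ 2 := by
    rw [hxdef]; field_simp; ring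
  exact ⟨((x + a) * (x + c) / x) * ((r * (x + b) + d * (a * e - b * d)) / (a : ℚ) ^ 2),
    by rw [hydef]; exact key12 a b c d e x r ha' hd' hx h⟩
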